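/- Let ℓ₁, ℓ₃, ℓ₄ > 0 and k ∈ ℝ. Consider the system of equations in complex unknowns c₁, c₂, c₃, c₄: c₁ = (1/√2)·( exp(i·k·ℓ₃)·c₃ + exp(i·k·ℓ₄)·c₄ ), c₂ = (1/√2)·( exp(i·k·ℓ₃)·c₃ − exp(i·k·ℓ₄)·c₄ ), c₃ = (1/√2)·exp(i·k·ℓ₁)·( c₁ + c₂ ), c₄ = (1/√2)·exp(i·k·ℓ₁)·( c₁ − c₂ ). Then: (a) a nonzero solution exists if and only if exp(i·k·(ℓ₁+ℓ₃)) = 1 or exp(i·k·(ℓ₁+ℓ₄)) = 1; (b) if exp(i·k·(ℓ₁+ℓ₃)) = 1 and exp(i·k·(ℓ₁+ℓ₄)) ≠ 1, then every solution has c₄ = 0, and if exp(i·k·(ℓ₁+ℓ₄)) = 1 and exp(i·k·(ℓ₁+ℓ₃)) ≠ 1, then every solution has c₃ = 0. -/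

import Mathlib

/-- The vertex coupling conditions for the compact two-loop graph with two vertices,
two edges of equal length `ℓ₁ = ℓ₂` from A to B, and two edges of lengths `ℓ₃`, `ℓ₄`
from B to A, with coupling matrix `(1/√2)·[[1,1],[1,-1]]` at both vertices, for an
eigenfunction `c_j · exp(ikx)` on the `j`-th edge. -/
def compactTwoLoopConds (ℓ₁ ℓ₃ ℓ₄ k : ℝ) (c₁ c₂ c₃ c₄ : ℂ) : Prop :=
  c₁ = (1 / (Real.sqrt 2 : ℂ)) * (Complex.exp (Complex.I * (k : ℂ) * (ℓ₃ : ℂ)) * c₃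
      + Complex.exp (Complex.I * (k : ℂ) * (ℓ₄ : ℂ)) * c₄) ∧
  c₂ = (1 / (Real.sqrt 2 : ℂ)) * (Complex.exp (Complex.I * (k : ℂ) * (ℓ₃ : ℂ)) * c₃
      - Complex.exp (Complex.I * (k : ℂ) * (ℓ₄ : ℂ)) * c₄) ∧
  c₃ = (1 / (Real.sqrt 2 : ℂ)) * Complex.exp (Complex.I * (k : ℂ) * (ℓ₁ : ℂ)) * (c₁ + c₂) ∧
  c₄ = (1 / (Real.sqrt 2 : ℂ)) * Complex.exp (Complex.I * (k : ℂ) * (ℓ₁ : ℂ)) * (c₁ - c₂)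

lemma key_ucp (ℓ₁ ℓ₃ ℓ₄ k : ℝ) (c₁ c₂ c₃ c₄ : ℂ)
    (h : compactTwoLoopConds ℓ₁ ℓ₃ ℓ₄ k c₁ c₂ c₃ c₄) :
    Complex.exp (Complex.I * (k : ℂ) * ((ℓ₁ : ℂ) + (ℓ₃ : ℂ))) * c₃ = c₃ ∧
    Complex.exp (Complex.I * (k : ℂ) * ((ℓ₁ : ℂ) + (ℓ₄ : ℂ))) * c₄ = c₄ := by
  obtain ⟨h1, h2, h3, h4⟩ := h
  have hs : (Real.sqrt 2 : ℂ) * (Real.sqrt 2 : ℂ) = 2 := by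
    exact_mod_cast congrArg Complex.ofReal (Real.mul_self_sqrt (by norm_num : (0:ℝ) ≤ 2))
  have hsne : (Real.sqrt 2 : ℂ) ≠ 0 := by
    simpa using Real.sqrt_ne_zero'.2 (by norm_num)
  have e3 : Complex.exp (Complex.I * (k : ℂ) * ((ℓ₁ : ℂ) + (ℓ₃ : ℂ)))
      = Complex.exp (Complex.I * (k : ℂ) * (ℓ₁ : ℂ)) * Complex.exp (Complex.I * (k : ℂ) * (ℓ₃ : ℂ)) := by
    rw [← Complex.exp_add]; ring_nf
  have e4 : Complex.exp (Complex.I * (k : ℂ) * ((ℓ₁ : ℂ) + (ℓ₄ : ℂ)))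
      = Complex.exp (Complex.I * (k : ℂ) * (ℓ₁ : ℂ)) * Complex.exp (Complex.I * (k : ℂ) * (ℓ₄ : ℂ)) := by
    rw [← Complex.exp_add]; ring_nf
  constructor
  · rw [e3]
    conv_rhs => rw [h3, h1, h2]
    field_simp
    linear_combination (Complex.exp (Complex.I * (k : ℂ) * (ℓ₃ : ℂ)) * c₃) * hs
  · rw [e4]
    conv_rhs => rw [h4, h1, h2]
    field_simp
    linear_combination (Complex.exp (Complex.I * (k : ℂ) * (ℓ₄ : ℂ)) * c₄) * hs

lemma build_sol (ℓ₁ ℓ₃ ℓ₄ k : ℝ) (c₃ c₄ : ℂ)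
    (h3 : Complex.exp (Complex.I * (k : ℂ) * ((ℓ₁ : ℂ) + (ℓ₃ : ℂ))) * c₃ = c₃)
    (h4 : Complex.exp (Complex.I * (k : ℂ) * ((ℓ₁ : ℂ) + (ℓ₄ : ℂ))) * c₄ = c₄) :
    compactTwoLoopConds ℓ₁ ℓ₃ ℓ₄ k
      ((1 / (Real.sqrt 2 : ℂ)) * (Complex.exp (Complex.I * (k : ℂ) * (ℓ₃ : ℂ)) * c₃
        + Complex.exp (Complex.I * (k : ℂ) * (ℓ₄ : ℂ)) * c₄))
      ((1 / (Real.sqrt 2 : ℂ)) * (Complex.exp (Complex.I * (k : ℂ) * (ℓ₃ : ℂ)) * c₃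
        - Complex.exp (Complex.I * (k : ℂ) * (ℓ₄ : ℂ)) * c₄)) c₃ c₄ := by
  have hs : (Real.sqrt 2 : ℂ) * (Real.sqrt 2 : ℂ) = 2 := by
    exact_mod_cast congrArg Complex.ofReal (Real.mul_self_sqrt (by norm_num : (0:ℝ) ≤ 2))
  have hsne : (Real.sqrt 2 : ℂ) ≠ 0 := by
    simpa using Real.sqrt_ne_zero'.2 (by norm_num)
  have e3 : Complex.exp (Complex.I * (k : ℂ) * ((ℓ₁ : ℂ) + (ℓ₃ : ℂ)))
      = Complex.exp (Complex.I * (k : ℂ) * (ℓ₁ : ℂ)) * Complex.exp (Complex.I * (k : ℂ) * (ℓ₃ : ℂ)) := by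
    rw [← Complex.exp_add]; ring_nf
  have e4 : Complex.exp (Complex.I * (k : ℂ) * ((ℓ₁ : ℂ) + (ℓ₄ : ℂ)))
      = Complex.exp (Complex.I * (k : ℂ) * (ℓ₁ : ℂ)) * Complex.exp (Complex.I * (k : ℂ) * (ℓ₄ : ℂ)) := by
    rw [← Complex.exp_add]; ring_nf
  refine ⟨rfl, rfl, ?_, ?_⟩
  · rw [e3] at h3
    calc c₃ = Complex.exp (Complex.I * (k : ℂ) * (ℓ₁ : ℂ)) * Complex.exp (Complex.I * (k : ℂ) * (ℓ₃ : ℂ)) * c₃ := h3.symm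
      _ = ((Real.sqrt 2 : ℂ) * (Real.sqrt 2 : ℂ))⁻¹ * 2 * (Complex.exp (Complex.I * (k : ℂ) * (ℓ₁ : ℂ)) * (Complex.exp (Complex.I * (k : ℂ) * (ℓ₃ : ℂ)) * c₃)) := by
          rw [hs]; ring
      _ = _ := by field_simp; ring
  · rw [e4] at h4
    calc c₄ = Complex.exp (Complex.I * (k : ℂ) * (ℓ₁ : ℂ)) * Complex.exp (Complex.I * (k : ℂ) * (ℓ₄ : ℂ)) * c₄ := h4.symm
      _ = ((Real.sqrt 2 : ℂ) * (Real.sqrt 2 : ℂ))⁻¹ * 2 * (Complex.exp (Complex.I * (k : ℂ) * (ℓ₁ : ℂ)) * (Complex.exp (Complex.I * (k : ℂ) * (ℓ₄ : ℂ)) * c₄)) := by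
          rw [hs]; ring
      _ = _ := by field_simp; ring

/-- On the compact two-loop graph: (a) a nonzero solution of the vertex conditions
exists iff `e^{ik(ℓ₁+ℓ₃)} = 1` or `e^{ik(ℓ₁+ℓ₄)} = 1`; (b) if only the first
(resp. only the second) quantization condition holds, every solution has `c₄ = 0`
(resp. `c₃ = 0`), so eigenfunctions vanish on an entire edge and the unique
continuation principle fails even on compact graphs. -/
theorem stmt14 (ℓ₁ ℓ₃ ℓ₄ : ℝ) (h1 : 0 < ℓ₁) (h3 : 0 < ℓ₃) (h4 : 0 < ℓ₄) (k : ℝ) :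
    ((∃ c₁ c₂ c₃ c₄ : ℂ, ¬(c₁ = 0 ∧ c₂ = 0 ∧ c₃ = 0 ∧ c₄ = 0) ∧
        compactTwoLoopConds ℓ₁ ℓ₃ ℓ₄ k c₁ c₂ c₃ c₄) ↔
      (Complex.exp (Complex.I * (k : ℂ) * ((ℓ₁ : ℂ) + (ℓ₃ : ℂ))) = 1 ∨
       Complex.exp (Complex.I * (k : ℂ) * ((ℓ₁ : ℂ) + (ℓ₄ : ℂ))) = 1)) ∧
    ((Complex.exp (Complex.I * (k : ℂ) * ((ℓ₁ : ℂ) + (ℓ₃ : ℂ))) = 1 ∧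
      Complex.exp (Complex.I * (k : ℂ) * ((ℓ₁ : ℂ) + (ℓ₄ : ℂ))) ≠ 1 →
      ∀ c₁ c₂ c₃ c₄ : ℂ, compactTwoLoopConds ℓ₁ ℓ₃ ℓ₄ k c₁ c₂ c₃ c₄ → c₄ = 0) ∧
     (Complex.exp (Complex.I * (k : ℂ) * ((ℓ₁ : ℂ) + (ℓ₄ : ℂ))) = 1 ∧
      Complex.exp (Complex.I * (k : ℂ) * ((ℓ₁ : ℂ) + (ℓ₃ : ℂ))) ≠ 1 →
      ∀ c₁ c₂ c₃ c₄ : ℂ, compactTwoLoopConds ℓ₁ ℓ₃ ℓ₄ k c₁ c₂ c₃ c₄ → c₃ = 0)) := by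
  refine ⟨⟨?_, ?_⟩, ?_, ?_⟩
  · rintro ⟨c₁, c₂, c₃, c₄, hne, hc⟩
    obtain ⟨k3, k4⟩ := key_ucp ℓ₁ ℓ₃ ℓ₄ k c₁ c₂ c₃ c₄ hc
    by_cases hc3 : c₃ = 0
    · by_cases hc4 : c₄ = 0
      · exfalso
        apply hne
        obtain ⟨e1, e2, _, _⟩ := hc
        subst hc3; subst hc4
        simp at e1 e2
        exact ⟨e1, e2, rfl, rfl⟩
      · right
        have : (Complex.exp (Complex.I * (k : ℂ) * ((ℓ₁ : ℂ) + (ℓ₄ : ℂ))) - 1) * c₄ = 0 := by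
          linear_combination k4
        rcases mul_eq_zero.1 this with h | h
        · exact sub_eq_zero.1 h
        · exact absurd h hc4
    · left
      have : (Complex.exp (Complex.I * (k : ℂ) * ((ℓ₁ : ℂ) + (ℓ₃ : ℂ))) - 1) * c₃ = 0 := by
        linear_combination k3
      rcases mul_eq_zero.1 this with h | h
      · exact sub_eq_zero.1 h
      · exact absurd h hc3
  · rintro (hq | hq)
    · refine ⟨_, _, 1, 0, ?_, build_sol ℓ₁ ℓ₃ ℓ₄ k 1 0 (by rw [hq, mul_one]) (by rw [mul_zero])⟩
      simp
    · refine ⟨_, _, 0, 1, ?_, build_sol ℓ₁ ℓ₃ ℓ₄ k 0 1 (by rw [mul_zero]) (by rw [hq, mul_one])⟩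
      simp
  · rintro ⟨-, hq4⟩ c₁ c₂ c₃ c₄ hc
    obtain ⟨-, k4⟩ := key_ucp ℓ₁ ℓ₃ ℓ₄ k c₁ c₂ c₃ c₄ hc
    have : (Complex.exp (Complex.I * (k : ℂ) * ((ℓ₁ : ℂ) + (ℓ₄ : ℂ))) - 1) * c₄ = 0 := by
      linear_combination k4
    rcases mul_eq_zero.1 this with h | h
    · exact absurd (sub_eq_zero.1 h) hq4
    · exact h
  · rintro ⟨-, hq3⟩ c₁ c₂ c₃ c₄ hc
    obtain ⟨k3, -⟩ := key_ucp ℓ₁ ℓ₃ ℓ₄ k c₁ c₂ c₃ c₄ hc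
    have : (Complex.exp (Complex.I * (k : ℂ) * ((ℓ₁ : ℂ) + (ℓ₃ : ℂ))) - 1) * c₃ = 0 := by
      linear_combination k3
    rcases mul_eq_zero.1 this with h | h
    · exact absurd (sub_eq_zero.1 h) hq3
    · exact h
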